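/- arXiv:1601.06668 — 2 statements merged into one kernel-verified Lean document; each statement's English description precedes it below -/
import Mathlib

section
/- If ψ : ℝ → ℝ is given by ψ(t) = a + b|t| + ∫₀^∞ (1 - e^{-λ|t|}) dμ(λ) with a, b ≥ 0 and μ a positive measure on (0,∞) satisfying ∫₀^∞ min(1,λ) dμ(λ) < ∞, then the restriction of ψ to (0,∞) is a Bernstein function, i.e., ψ ≥ 0 on (0,∞) and (-1)^{k-1} ψ^{(k)} ≥ 0 on (0,∞) for all k ≥ 1. -/
open MeasureTheory Real Filter Metric

private lemma pow_div_fact_le_exp (x : ℝ) (hx : 0 ≤ x) (k : ℕ) :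
    x ^ k / k.factorial ≤ Real.exp x := by
  calc x ^ k / k.factorial
      ≤ ∑ i ∈ Finset.range (k + 1), x ^ i / i.factorial := by
        refine Finset.single_le_sum (f := fun i => x ^ i / (i.factorial : ℝ)) ?_ ?_
        · intro i _; positivity
        · simp
    _ ≤ Real.exp x := Real.sum_le_exp_of_nonneg hx _

private lemma key_bound {c : ℝ} (hc : 0 < c) {k : ℕ} (hk : 1 ≤ k) {l : ℝ} (hl : 0 < l) :
    l ^ k * Real.exp (-l * c) ≤ max 1 (k.factorial / c ^ k) * min 1 l := by
  rcases le_or_gt l 1 with h1 | h1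
  · rw [min_eq_right h1]
    have h2 : l ^ k ≤ l := by
      calc l ^ k ≤ l ^ 1 := pow_le_pow_of_le_one hl.le h1 hk
        _ = l := pow_one l
    have h3 : Real.exp (-l * c) ≤ 1 := by
      rw [Real.exp_le_one_iff]; nlinarith
    calc l ^ k * Real.exp (-l * c) ≤ l * 1 :=
          mul_le_mul h2 h3 (Real.exp_pos _).le hl.le
      _ = l := mul_one l
      _ ≤ max 1 (k.factorial / c ^ k) * l :=
          le_mul_of_one_le_left hl.le (le_max_left _ _)
  · rw [min_eq_left h1.le, mul_one]
    have hek : (0:ℝ) < Real.exp (l * c) := Real.exp_pos _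
    have hck : (0:ℝ) < c ^ k := by positivity
    have h2 : (l * c) ^ k ≤ k.factorial * Real.exp (l * c) := by
      have h := pow_div_fact_le_exp (l * c) (by positivity) k
      rw [div_le_iff₀ (by positivity)] at h
      nlinarith
    have : l ^ k * Real.exp (-l * c) ≤ k.factorial / c ^ k := by
      have hkc : (↑k.factorial / c ^ k) * c ^ k = (k.factorial : ℝ) :=
        div_mul_cancel₀ _ hck.ne'
      rw [show -l * c = -(l * c) by ring, Real.exp_neg, ← div_eq_mul_inv,
        div_le_div_iff₀ hek hck]
      nlinarith [h2, hkc, mul_pow l c k]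
    exact this.trans (le_max_right _ _)

private lemma integrable_min (μ : Measure ℝ)
    (hμ : ∫⁻ l in Set.Ioi (0 : ℝ), ENNReal.ofReal (min 1 l) ∂μ < ⊤) :
    Integrable (fun l => min 1 l) (μ.restrict (Set.Ioi 0)) := by
  refine ⟨(continuous_const.min continuous_id).aestronglyMeasurable, ?_⟩
  rw [hasFiniteIntegral_iff_ofReal ?_]
  · exact hμ
  · filter_upwards [ae_restrict_mem measurableSet_Ioi] with l hl
    exact le_min zero_le_one hl.le

private lemma integrable_pow_exp (μ : Measure ℝ)
    (hμ : ∫⁻ l in Set.Ioi (0 : ℝ), ENNReal.ofReal (min 1 l) ∂μ < ⊤)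
    {k : ℕ} (hk : 1 ≤ k) {t : ℝ} (ht : 0 < t) :
    Integrable (fun l => l ^ k * Real.exp (-l * t)) (μ.restrict (Set.Ioi 0)) := by
  apply Integrable.mono' ((integrable_min μ hμ).const_mul (max 1 (k.factorial / t ^ k)))
  · exact Continuous.aestronglyMeasurable (by fun_prop)
  · filter_upwards [ae_restrict_mem measurableSet_Ioi] with l hl
    have hl' : (0:ℝ) < l := hl
    rw [Real.norm_eq_abs, abs_of_nonneg (by positivity)]
    exact key_bound ht hk hl'

private lemma integrable_one_sub_exp (μ : Measure ℝ)
    (hμ : ∫⁻ l in Set.Ioi (0 : ℝ), ENNReal.ofReal (min 1 l) ∂μ < ⊤)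
    {t : ℝ} (ht : 0 < t) :
    Integrable (fun l => 1 - Real.exp (-l * t)) (μ.restrict (Set.Ioi 0)) := by
  apply Integrable.mono' ((integrable_min μ hμ).const_mul (max 1 t))
  · exact Continuous.aestronglyMeasurable (by fun_prop)
  · filter_upwards [ae_restrict_mem measurableSet_Ioi] with l hl
    have hl' : (0:ℝ) < l := hl
    have he1 : Real.exp (-l * t) ≤ 1 := by
      rw [Real.exp_le_one_iff]; nlinarith
    have he2 : 1 - l * t ≤ Real.exp (-l * t) := by
      have := Real.add_one_le_exp (-l * t); linarith
    rw [Real.norm_eq_abs, abs_of_nonneg (by linarith)]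
    rcases le_or_gt l 1 with h1 | h1
    · rw [min_eq_right h1]
      have : 1 - Real.exp (-l * t) ≤ l * t := by linarith
      calc 1 - Real.exp (-l * t) ≤ l * t := this
        _ = t * l := mul_comm l t
        _ ≤ max 1 t * l := mul_le_mul_of_nonneg_right (le_max_right _ _) hl'.le
    · rw [min_eq_left h1.le, mul_one]
      linarith [le_max_left (1:ℝ) t, Real.exp_pos (-l * t)]

private lemma hasDerivAt_pow_exp_integral (μ : Measure ℝ)
    (hμ : ∫⁻ l in Set.Ioi (0 : ℝ), ENNReal.ofReal (min 1 l) ∂μ < ⊤)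
    {k : ℕ} (hk : 1 ≤ k) {t : ℝ} (ht : 0 < t) :
    HasDerivAt (fun s => ∫ l in Set.Ioi (0 : ℝ), l ^ k * Real.exp (-l * s) ∂μ)
      (-∫ l in Set.Ioi (0 : ℝ), l ^ (k + 1) * Real.exp (-l * t) ∂μ) t := by
  have key := hasDerivAt_integral_of_dominated_loc_of_deriv_le
    (μ := μ.restrict (Set.Ioi 0)) (x₀ := t) (s := ball t (t / 2))
    (F := fun s l => l ^ k * Real.exp (-l * s))
    (F' := fun s l => -(l ^ (k + 1) * Real.exp (-l * s)))
    (bound := fun l => max 1 ((k + 1).factorial / (t / 2) ^ (k + 1)) * min 1 l)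
    (ball_mem_nhds t (half_pos ht))
    (Eventually.of_forall fun x => Continuous.aestronglyMeasurable (by fun_prop))
    (integrable_pow_exp μ hμ hk ht)
    (Continuous.aestronglyMeasurable (by fun_prop))
    ?_ (((integrable_min μ hμ).const_mul _)) ?_
  · have : ∫ l in Set.Ioi (0 : ℝ), -(l ^ (k + 1) * Real.exp (-l * t)) ∂μ
        = -∫ l in Set.Ioi (0 : ℝ), l ^ (k + 1) * Real.exp (-l * t) ∂μ := integral_neg _
    rw [this] at key
    exact key.2
  · filter_upwards [ae_restrict_mem measurableSet_Ioi] with l hl x hx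
    have hl' : (0:ℝ) < l := hl
    rw [norm_neg, Real.norm_eq_abs, abs_of_nonneg (by positivity)]
    have hx2 : t / 2 < x := by
      have := abs_lt.1 (mem_ball_iff_norm.1 hx); linarith [this.1]
    calc l ^ (k + 1) * Real.exp (-l * x)
        ≤ l ^ (k + 1) * Real.exp (-l * (t / 2)) := by
          apply mul_le_mul_of_nonneg_left _ (by positivity)
          exact Real.exp_le_exp.2 (by nlinarith)
      _ ≤ _ := key_bound (half_pos ht) (Nat.le_add_left 1 k) hl'
  · refine Eventually.of_forall fun l => fun x _ => ?_
    have h1 : HasDerivAt (fun x : ℝ => -l * x) (-l) x := by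
      simpa using (hasDerivAt_id x).const_mul (-l)
    have h2 := (h1.exp).const_mul (l ^ k)
    exact h2.congr_deriv (by ring)

private lemma hasDerivAt_one_sub_exp_integral (μ : Measure ℝ)
    (hμ : ∫⁻ l in Set.Ioi (0 : ℝ), ENNReal.ofReal (min 1 l) ∂μ < ⊤)
    {t : ℝ} (ht : 0 < t) :
    HasDerivAt (fun s => ∫ l in Set.Ioi (0 : ℝ), (1 - Real.exp (-l * s)) ∂μ)
      (∫ l in Set.Ioi (0 : ℝ), l ^ 1 * Real.exp (-l * t) ∂μ) t := by
  have key := hasDerivAt_integral_of_dominated_loc_of_deriv_le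
    (μ := μ.restrict (Set.Ioi 0)) (x₀ := t) (s := ball t (t / 2))
    (F := fun s l => 1 - Real.exp (-l * s))
    (F' := fun s l => l ^ 1 * Real.exp (-l * s))
    (bound := fun l => max 1 ((1 : ℕ).factorial / (t / 2) ^ 1) * min 1 l)
    (ball_mem_nhds t (half_pos ht))
    (Eventually.of_forall fun x => Continuous.aestronglyMeasurable (by fun_prop))
    (integrable_one_sub_exp μ hμ ht)
    (Continuous.aestronglyMeasurable (by fun_prop))
    ?_ (((integrable_min μ hμ).const_mul _)) ?_
  · exact key.2
  · filter_upwards [ae_restrict_mem measurableSet_Ioi] with l hl x hx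
    have hl' : (0:ℝ) < l := hl
    rw [Real.norm_eq_abs, abs_of_nonneg (by positivity)]
    have hx2 : t / 2 < x := by
      have := abs_lt.1 (mem_ball_iff_norm.1 hx); linarith [this.1]
    calc l ^ 1 * Real.exp (-l * x)
        ≤ l ^ 1 * Real.exp (-l * (t / 2)) := by
          apply mul_le_mul_of_nonneg_left _ (by positivity)
          exact Real.exp_le_exp.2 (by nlinarith)
      _ ≤ _ := key_bound (half_pos ht) le_rfl hl'
  · refine Eventually.of_forall fun l => fun x _ => ?_
    have h1 : HasDerivAt (fun x : ℝ => -l * x) (-l) x := by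
      simpa using (hasDerivAt_id x).const_mul (-l)
    have h2 := (h1.exp).const_sub 1
    convert h2 using 1
    ring

/-- The Lévy–Khintchine representation defines a Bernstein function on `(0,∞)`. -/
theorem levyKhintchine_bernstein (a b : ℝ) (ha : 0 ≤ a) (hb : 0 ≤ b)
    (μ : Measure ℝ)
    (hμ : ∫⁻ l in Set.Ioi (0 : ℝ), ENNReal.ofReal (min 1 l) ∂μ < ⊤)
    (ψ : ℝ → ℝ)
    (hψ : ∀ t : ℝ, ψ t = a + b * |t| +
      ∫ l in Set.Ioi (0 : ℝ), (1 - Real.exp (-l * |t|)) ∂μ) :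
    (∀ t : ℝ, 0 < t → 0 ≤ ψ t) ∧
    (∀ k : ℕ, 1 ≤ k → ∀ t : ℝ, 0 < t → 0 ≤ (-1 : ℝ) ^ (k - 1) * iteratedDeriv k ψ t) := by
  set F : ℝ → ℝ := fun s => a + b * s +
    ∫ l in Set.Ioi (0 : ℝ), (1 - Real.exp (-l * s)) ∂μ with hF
  have hψF : ∀ t : ℝ, 0 < t → ψ =ᶠ[nhds t] F := by
    intro t ht
    filter_upwards [isOpen_Ioi.mem_nhds ht] with s hs
    rw [hψ, hF]
    simp only [abs_of_pos (Set.mem_Ioi.mp hs)]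
  have hclaim : ∀ k : ℕ, 1 ≤ k → ∀ t : ℝ, 0 < t → iteratedDeriv k ψ t =
      (if k = 1 then b else 0) + (-1 : ℝ) ^ (k - 1) *
        ∫ l in Set.Ioi (0 : ℝ), l ^ k * Real.exp (-l * t) ∂μ := by
    intro k hk
    induction k, hk using Nat.le_induction with
    | base =>
      intro t ht
      have hlin : HasDerivAt (fun s : ℝ => a + b * s) b t := by
        simpa using ((hasDerivAt_id t).const_mul b).const_add a
      have hFd : HasDerivAt F
          (b + ∫ l in Set.Ioi (0 : ℝ), l ^ 1 * Real.exp (-l * t) ∂μ) t :=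
        hlin.add (hasDerivAt_one_sub_exp_integral μ hμ ht)
      rw [iteratedDeriv_one, (hψF t ht).deriv_eq, hFd.deriv]
      simp
    | succ k hk ih =>
      intro t ht
      have heq : iteratedDeriv k ψ =ᶠ[nhds t] fun s =>
          (if k = 1 then b else 0) + (-1 : ℝ) ^ (k - 1) *
            ∫ l in Set.Ioi (0 : ℝ), l ^ k * Real.exp (-l * s) ∂μ := by
        filter_upwards [isOpen_Ioi.mem_nhds ht] with s hs
        exact ih s hs
      have hd : HasDerivAt (fun s =>
          (if k = 1 then b else 0) + (-1 : ℝ) ^ (k - 1) *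
            ∫ l in Set.Ioi (0 : ℝ), l ^ k * Real.exp (-l * s) ∂μ)
          ((-1 : ℝ) ^ (k - 1) *
            -∫ l in Set.Ioi (0 : ℝ), l ^ (k + 1) * Real.exp (-l * t) ∂μ) t :=
        ((hasDerivAt_pow_exp_integral μ hμ hk ht).const_mul _).const_add _
      rw [iteratedDeriv_succ, heq.deriv_eq, hd.deriv]
      obtain ⟨m, rfl⟩ : ∃ m, k = m + 1 := ⟨k - 1, (Nat.succ_pred_eq_of_pos hk).symm⟩
      have : m + 1 + 1 ≠ 1 := by omega
      simp only [this, if_false, Nat.add_sub_cancel]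
      ring
  constructor
  · intro t ht
    rw [hψ]
    have hI : 0 ≤ ∫ l in Set.Ioi (0 : ℝ), (1 - Real.exp (-l * |t|)) ∂μ := by
      apply setIntegral_nonneg measurableSet_Ioi
      intro l hl
      have : Real.exp (-l * |t|) ≤ 1 := by
        rw [Real.exp_le_one_iff]
        have : (0:ℝ) < l := hl
        nlinarith [abs_nonneg t]
      linarith
    have : 0 ≤ b * |t| := mul_nonneg hb (abs_nonneg t)
    linarith
  · intro k hk t ht
    rw [hclaim k hk t ht]
    set s : ℝ := (-1 : ℝ) ^ (k - 1) with hs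
    set g : ℝ := ∫ l in Set.Ioi (0 : ℝ), l ^ k * Real.exp (-l * t) ∂μ with hg
    have hss : s * s = 1 := by
      rw [hs, ← pow_add]
      exact Even.neg_one_pow ⟨k - 1, rfl⟩
    have hgpos : 0 ≤ g := by
      apply setIntegral_nonneg measurableSet_Ioi
      intro l hl
      have : (0:ℝ) < l := hl
      positivity
    have hc : 0 ≤ s * (if k = 1 then b else 0) := by
      by_cases h : k = 1
      · simp [h, hs, hb]
      · simp [h]
    have : s * ((if k = 1 then b else 0) + s * g) = s * (if k = 1 then b else 0) + g := by
      rw [mul_add, ← mul_assoc, hss, one_mul]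
    rw [this]
    exact add_nonneg hc hgpos
end

section
/- For 0 < H ≤ 1/2, the fractional Brownian motion covariance kernel C(s,t) = (|s|^{2H} + |t|^{2H} - |s-t|^{2H})/2 is positive definite on ℝ. -/
open MeasureTheory Set Real


lemma fBM_core_integrable {α : ℝ} (h0 : 0 < α) (h2 : α < 2) (x : ℝ) :
    IntegrableOn (fun u : ℝ => (1 - Real.cos (x * u)) * u ^ (-1 - α)) (Ioi 0) := by
  have hmeas : ∀ s : Set ℝ, MeasurableSet s → (∀ u ∈ s, u ≠ 0) → AEStronglyMeasurable
      (fun u : ℝ => (1 - Real.cos (x * u)) * u ^ (-1 - α)) (volume.restrict s) := by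
    intro s hs hs0
    refine ContinuousOn.aestronglyMeasurable ?_ hs
    exact ((continuous_const.sub (Real.continuous_cos.comp
      (continuous_const.mul continuous_id))).continuousOn).mul
      (continuousOn_id.rpow_const fun u hu => Or.inl (hs0 u hu))
  rw [← Ioc_union_Ioi_eq_Ioi (zero_le_one' ℝ)]
  apply IntegrableOn.union
  · -- on Ioc 0 1, dominate by (x^2/2) * u^(1-α)
    have hint : IntegrableOn (fun u : ℝ => x ^ 2 / 2 * u ^ (1 - α)) (Ioc 0 1) := by
      have := (intervalIntegral.intervalIntegrable_rpow' (a := 0) (b := 1) (r := 1 - α) (by linarith)).1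
      exact (by simpa using this.const_mul (x ^ 2 / 2) : Integrable (fun u : ℝ => x ^ 2 / 2 * u ^ (1 - α)) (volume.restrict (Ioc 0 1)))
    refine Integrable.mono' hint (hmeas _ measurableSet_Ioc fun u hu => ne_of_gt hu.1) ?_
    filter_upwards [ae_restrict_mem measurableSet_Ioc] with u hu
    have hu0 : 0 < u := hu.1
    have h1 : 0 ≤ 1 - Real.cos (x * u) := by linarith [Real.cos_le_one (x * u)]
    have h2' : 1 - Real.cos (x * u) ≤ (x * u) ^ 2 / 2 := by
      linarith [Real.one_sub_sq_div_two_le_cos (x := x * u)]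
    have hrn : (0:ℝ) ≤ u ^ (-1 - α) := rpow_nonneg hu0.le _
    rw [norm_mul, norm_of_nonneg h1, norm_of_nonneg hrn]
    calc (1 - Real.cos (x * u)) * u ^ (-1 - α) ≤ (x * u) ^ 2 / 2 * u ^ (-1 - α) :=
          mul_le_mul_of_nonneg_right h2' hrn
      _ = x ^ 2 / 2 * (u ^ (2:ℝ) * u ^ (-1 - α)) := by
          rw [Real.rpow_two]; ring
      _ = x ^ 2 / 2 * u ^ (1 - α) := by
          rw [← Real.rpow_add hu0]; congr 1; ring
  · -- on Ioi 1, dominate by 2 * u^(-1-α)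
    have hint : IntegrableOn (fun u : ℝ => 2 * u ^ (-1 - α)) (Ioi 1) :=
      (integrableOn_Ioi_rpow_of_lt (by linarith) one_pos).const_mul 2
    refine Integrable.mono' hint (hmeas _ measurableSet_Ioi fun u hu => ne_of_gt (lt_trans one_pos hu)) ?_
    filter_upwards [ae_restrict_mem measurableSet_Ioi] with u hu
    have hu0 : (0:ℝ) < u := lt_trans one_pos hu
    have h1 : 0 ≤ 1 - Real.cos (x * u) := by linarith [Real.cos_le_one (x * u)]
    have h2' : 1 - Real.cos (x * u) ≤ 2 := by linarith [Real.neg_one_le_cos (x * u)]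
    have hrn : (0:ℝ) ≤ u ^ (-1 - α) := rpow_nonneg hu0.le _
    rw [norm_mul, norm_of_nonneg h1, norm_of_nonneg hrn]
    exact mul_le_mul_of_nonneg_right h2' hrn

lemma fBM_scaling {α : ℝ} (h0 : 0 < α) (h2 : α < 2) (x : ℝ) :
    ∫ u in Ioi (0:ℝ), (1 - Real.cos (x * u)) * u ^ (-1 - α)
      = |x| ^ α * ∫ u in Ioi (0:ℝ), (1 - Real.cos u) * u ^ (-1 - α) := by
  rcases eq_or_ne x 0 with rfl | hx
  · simp [Real.zero_rpow h0.ne']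
  · set b := |x| with hb
    have hb0 : 0 < b := abs_pos.mpr hx
    have hcong : ∀ u ∈ Ioi (0:ℝ), (1 - Real.cos (x * u)) * u ^ (-1 - α)
        = b ^ (1 + α) * ((1 - Real.cos (b * u)) * (b * u) ^ (-1 - α)) := by
      intro u hu
      have hu0 : (0:ℝ) < u := hu
      have hc : Real.cos (b * u) = Real.cos (x * u) := by
        have habs : |x| * u = |x * u| := by rw [abs_mul, abs_of_nonneg hu0.le]
        rw [hb, habs, Real.cos_abs]
      rw [hc, Real.mul_rpow hb0.le hu0.le]
      have : b ^ (1 + α) * b ^ (-1 - α) = 1 := by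
        rw [← Real.rpow_add hb0]; norm_num
      calc (1 - Real.cos (x * u)) * u ^ (-1 - α)
          = (b ^ (1 + α) * b ^ (-1 - α)) * ((1 - Real.cos (x * u)) * u ^ (-1 - α)) := by
            rw [this, one_mul]
        _ = b ^ (1 + α) * ((1 - Real.cos (x * u)) * (b ^ (-1 - α) * u ^ (-1 - α))) := by ring
    rw [setIntegral_congr_fun measurableSet_Ioi hcong, integral_const_mul]
    have := integral_comp_mul_left_Ioi
      (fun v : ℝ => (1 - Real.cos v) * v ^ (-1 - α)) 0 hb0
    rw [mul_zero] at this
    rw [this, smul_eq_mul, ← mul_assoc]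
    congr 1
    rw [← Real.rpow_neg_one b, ← Real.rpow_add hb0]
    congr 1
    ring

lemma fBM_K_pos {α : ℝ} (h0 : 0 < α) (h2 : α < 2) :
    0 < ∫ u in Ioi (0:ℝ), (1 - Real.cos u) * u ^ (-1 - α) := by
  have hfi : IntegrableOn (fun u : ℝ => (1 - Real.cos u) * u ^ (-1 - α)) (Ioi 0) := by
    simpa using fBM_core_integrable h0 h2 1
  have hsub : Ioc (π/2) π ⊆ Ioi (0:ℝ) := fun u hu => lt_of_lt_of_le (by positivity) hu.1.le
  have hnn : 0 ≤ᵐ[volume.restrict (Ioi (0:ℝ))]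
      fun u : ℝ => (1 - Real.cos u) * u ^ (-1 - α) := by
    filter_upwards [ae_restrict_mem measurableSet_Ioi] with u hu
    have hu0 : (0:ℝ) < u := hu
    have hc := Real.cos_le_one u
    exact mul_nonneg (by linarith) (Real.rpow_nonneg hu0.le _)
  have h1 : ∫ u in Ioc (π/2) π, (fun _ : ℝ => Real.pi ^ (-1 - α)) u
      ≤ ∫ u in Ioc (π/2) π, (1 - Real.cos u) * u ^ (-1 - α) := by
    refine setIntegral_mono_on ((integrableOn_const_iff (C := Real.pi ^ (-1 - α))).mpr (Or.inr ?_))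
      (hfi.mono_set hsub) measurableSet_Ioc ?_
    · rw [Real.volume_Ioc]; exact ENNReal.ofReal_lt_top
    · intro u hu
      have hu0 : (0:ℝ) < u := hsub hu
      have hcos : Real.cos u ≤ 0 :=
        Real.cos_nonpos_of_pi_div_two_le_of_le hu.1.le (by linarith [hu.2])
      have hr : Real.pi ^ (-1 - α) ≤ u ^ (-1 - α) :=
        Real.rpow_le_rpow_of_nonpos hu0 hu.2 (by linarith)
      calc Real.pi ^ (-1 - α) ≤ u ^ (-1 - α) := hr
        _ = 1 * u ^ (-1 - α) := (one_mul _).symm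
        _ ≤ (1 - Real.cos u) * u ^ (-1 - α) :=
            mul_le_mul_of_nonneg_right (by linarith) (Real.rpow_nonneg hu0.le _)
  have h2' : ∫ u in Ioc (π/2) π, (1 - Real.cos u) * u ^ (-1 - α)
      ≤ ∫ u in Ioi (0:ℝ), (1 - Real.cos u) * u ^ (-1 - α) :=
    setIntegral_mono_set hfi hnn (HasSubset.Subset.eventuallyLE hsub)
  have hconst : (0:ℝ) < ∫ _ in Ioc (π/2) π, (fun _ : ℝ => Real.pi ^ (-1 - α)) (0:ℝ) := by
    rw [setIntegral_const, Real.volume_real_Ioc, smul_eq_mul]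
    have hπ := Real.pi_pos
    have : (0:ℝ) < π - π/2 := by linarith
    rw [max_eq_left this.le]
    positivity
  calc (0:ℝ) < _ := hconst
    _ ≤ _ := h1
    _ ≤ _ := h2'

/-- For `0 < H ≤ 1/2`, the fractional Brownian motion covariance kernel
`C(s,t) = (|s|^{2H} + |t|^{2H} - |s-t|^{2H})/2` is positive definite on `ℝ`. -/
theorem fBM_cov_posDef (H : ℝ) (hH0 : 0 < H) (hH : H ≤ 1 / 2) :
    ∀ (n : ℕ) (t : Fin n → ℝ) (c : Fin n → ℝ),
      0 ≤ ∑ j, ∑ k, c j * c k *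
        ((|t j| ^ (2 * H) + |t k| ^ (2 * H) - |t j - t k| ^ (2 * H)) / 2) := by
  intro n t c
  set α : ℝ := 2 * H with hα
  have hα0 : 0 < α := by positivity
  have hα2 : α < 2 := by rw [hα]; linarith
  set K : ℝ := ∫ u in Ioi (0:ℝ), (1 - Real.cos u) * u ^ (-1 - α) with hK
  have hKpos : 0 < K := fBM_K_pos hα0 hα2
  set f : ℝ → ℝ → ℝ := fun y u => (1 - Real.cos (y * u)) * u ^ (-1 - α) with hf
  have hI : ∀ y : ℝ, IntegrableOn (f y) (Ioi 0) := fun y => fBM_core_integrable hα0 hα2 y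
  have e : ∀ y : ℝ, |y| ^ α * K = ∫ u in Ioi (0:ℝ), f y u :=
    fun y => (fBM_scaling hα0 hα2 y).symm
  have hg : ∀ j k : Fin n, Integrable
      (fun u => c j * c k * (f (t j) u + f (t k) u - f (t j - t k) u))
      (volume.restrict (Ioi 0)) :=
    fun j k => (((hI (t j)).add (hI (t k))).sub (hI (t j - t k))).const_mul _
  set S : ℝ := ∑ j, ∑ k, c j * c k *
      ((|t j| ^ α + |t k| ^ α - |t j - t k| ^ α) / 2) with hS
  have key : S * (2 * K)
      = ∫ u in Ioi (0:ℝ), ((∑ j, c j * (1 - Real.cos (t j * u))) ^ 2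
          + (∑ j, c j * Real.sin (t j * u)) ^ 2) * u ^ (-1 - α) := by
    calc S * (2 * K)
        = ∑ j, ∑ k, c j * c k *
            (|t j| ^ α * K + |t k| ^ α * K - |t j - t k| ^ α * K) := by
          rw [hS, Finset.sum_mul]
          refine Finset.sum_congr rfl fun j _ => ?_
          rw [Finset.sum_mul]
          exact Finset.sum_congr rfl fun k _ => by ring
      _ = ∑ j, ∑ k, ∫ u in Ioi (0:ℝ),
            c j * c k * (f (t j) u + f (t k) u - f (t j - t k) u) := by
          refine Finset.sum_congr rfl fun j _ => Finset.sum_congr rfl fun k _ => ?_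
          rw [e, e, e, ← integral_add (hI _) (hI _),
            ← integral_sub (f := fun a => f (t j) a + f (t k) a)
              (g := fun a => f (t j - t k) a) ((hI _).add (hI _)) (hI _),
            ← integral_const_mul]
      _ = ∫ u in Ioi (0:ℝ), ∑ j, ∑ k,
            c j * c k * (f (t j) u + f (t k) u - f (t j - t k) u) := by
          rw [integral_finset_sum _ fun j _ => integrable_finset_sum _ fun k _ => hg j k]
          refine Finset.sum_congr rfl fun j _ => ?_
          rw [integral_finset_sum _ fun k _ => hg j k]
      _ = _ := by
          refine integral_congr_ae (Filter.Eventually.of_forall fun u => ?_)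
          have expand : ∀ j k : Fin n,
              c j * c k * (f (t j) u + f (t k) u - f (t j - t k) u)
              = ((c j * (1 - Real.cos (t j * u))) * (c k * (1 - Real.cos (t k * u)))
                + (c j * Real.sin (t j * u)) * (c k * Real.sin (t k * u))) * u ^ (-1 - α) := by
            intro j k
            simp only [hf]
            rw [sub_mul (t j) (t k) u, Real.cos_sub]
            ring
          simp_rw [expand]
          rw [add_mul]
          simp_rw [add_mul, Finset.sum_add_distrib]
          congr 1
          · rw [sq, Finset.sum_mul_sum, Finset.sum_mul]
            exact Finset.sum_congr rfl fun j _ => by rw [Finset.sum_mul]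
          · rw [sq, Finset.sum_mul_sum, Finset.sum_mul]
            exact Finset.sum_congr rfl fun j _ => by rw [Finset.sum_mul]
  have hnn : 0 ≤ ∫ u in Ioi (0:ℝ), ((∑ j, c j * (1 - Real.cos (t j * u))) ^ 2
      + (∑ j, c j * Real.sin (t j * u)) ^ 2) * u ^ (-1 - α) := by
    refine setIntegral_nonneg measurableSet_Ioi fun u hu => ?_
    have hu0 : (0:ℝ) < u := hu
    positivity
  rw [← key] at hnn
  by_contra hneg
  push_neg at hneg
  nlinarith [hnn, hKpos, hneg]
end
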